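/- Lipschitz property for the SI process (Lemma 4A): let h > 0 and let A be a random edge-timer vector whose components (A(e))_{e∈E(G)} are independent exponential rate-1 random variables. Define f(x,a) = (g(x,a) − x)/h, a vector in ℝ^V. Then for all states x and z, E[‖f(x,A) − f(z,A)‖₁] ≤ k·‖x − z‖₁. -/

import Mathlib

open MeasureTheory ProbabilityTheory Real

/-- View a Boolean infection state as a real number (`true ↦ 1`, `false ↦ 0`). -/
def boolToR (b : Bool) : ℝ := if b then 1 else 0

open Classical in
/-- One step of the SI discrete-time simulation (DTS): node `j` is infected afterwards iff
it was infected, or some infected neighbor's edge timer fires within time `h`. -/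
noncomputable def siDTS {V : Type*} (G : SimpleGraph V) (h : ℝ) (x : V → Bool)
    (a : G.edgeSet → ℝ) : V → Bool := fun j =>
  if x j = true ∨ ∃ j', ∃ hadj : G.Adj j j',
      x j' = true ∧ a ⟨s(j, j'), (SimpleGraph.mem_edgeSet G).mpr hadj⟩ ≤ h
  then true else false

/-- `f(x,a) = (g(x,a) - x)/h`, the incremental rate of change of the SI DTS, as a vector
in `ℝ^V`. -/
noncomputable def siF {V : Type*} (G : SimpleGraph V) (h : ℝ) (x : V → Bool)
    (a : G.edgeSet → ℝ) : V → ℝ := fun j =>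
  (boolToR (siDTS G h x a j) - boolToR (x j)) / h

open Classical in
/-- Indicator (as a real number) that `j` and `j'` are adjacent and the timer on the edge
`{j,j'}` fires within time `h`. -/
noncomputable def edgeInd {V : Type*} (G : SimpleGraph V) (h : ℝ) (a : G.edgeSet → ℝ)
    (j j' : V) : ℝ :=
  if hadj : G.Adj j j' then
    (if a ⟨s(j, j'), (SimpleGraph.mem_edgeSet G).mpr hadj⟩ ≤ h then 1 else 0)
  else 0

lemma edgeInd_nonneg {V : Type*} (G : SimpleGraph V) (h : ℝ) (a : G.edgeSet → ℝ)
    (j j' : V) : 0 ≤ edgeInd G h a j j' := by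
  unfold edgeInd
  split
  · split <;> norm_num
  · exact le_rfl

lemma edgeInd_symm {V : Type*} (G : SimpleGraph V) (h : ℝ) (a : G.edgeSet → ℝ)
    (j j' : V) : edgeInd G h a j j' = edgeInd G h a j' j := by
  unfold edgeInd
  by_cases hadj : G.Adj j j'
  · rw [dif_pos hadj, dif_pos hadj.symm]
    have he : (⟨s(j, j'), (SimpleGraph.mem_edgeSet G).mpr hadj⟩ : G.edgeSet)
        = ⟨s(j', j), (SimpleGraph.mem_edgeSet G).mpr hadj.symm⟩ := by
      apply Subtype.ext
      exact Sym2.eq_swap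
    rw [he]
  · rw [dif_neg hadj, dif_neg (fun hs => hadj hs.symm)]

lemma edgeInd_eq_one {V : Type*} {G : SimpleGraph V} {h : ℝ} {a : G.edgeSet → ℝ}
    {j j' : V} (hadj : G.Adj j j')
    (hle : a ⟨s(j, j'), (SimpleGraph.mem_edgeSet G).mpr hadj⟩ ≤ h) :
    edgeInd G h a j j' = 1 := by
  unfold edgeInd
  rw [dif_pos hadj, if_pos hle]

/-- First weight: both states of `j` are susceptible and the states of `j'` differ. -/
noncomputable def tOne {V : Type*} (x z : V → Bool) (j j' : V) : ℝ :=
  if x j = false ∧ z j = false ∧ x j' ≠ z j' then 1 else 0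

/-- Second weight: the states of `j` differ and `j'` is infected in the relevant state. -/
noncomputable def tTwo {V : Type*} (x z : V → Bool) (j j' : V) : ℝ :=
  if (x j = true ∧ z j = false ∧ z j' = true) ∨ (x j = false ∧ z j = true ∧ x j' = true)
  then 1 else 0

lemma tOne_nonneg {V : Type*} (x z : V → Bool) (j j' : V) : 0 ≤ tOne x z j j' := by
  unfold tOne; split <;> norm_num

lemma tTwo_nonneg {V : Type*} (x z : V → Bool) (j j' : V) : 0 ≤ tTwo x z j j' := by
  unfold tTwo; split <;> norm_num

/-- Key disjointness bound: `tOne j' j + tTwo j j' ≤ |x j - z j|`. -/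
lemma tOne_add_tTwo_le {V : Type*} (x z : V → Bool) (j j' : V) :
    tOne x z j' j + tTwo x z j j' ≤ |boolToR (x j) - boolToR (z j)| := by
  unfold tOne tTwo boolToR
  cases hxj : x j <;> cases hzj : z j <;> cases hxj' : x j' <;> cases hzj' : z j' <;>
    simp [hxj, hzj, hxj', hzj']

/-- Pointwise deterministic bound on `|f(x,a)_j - f(z,a)_j|`. -/
lemma siF_pointwise {V : Type*} [Fintype V] (G : SimpleGraph V) {h : ℝ} (h0 : 0 < h)
    (x z : V → Bool) (a : G.edgeSet → ℝ) (j : V) :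
    |siF G h x a j - siF G h z a j| ≤
      (1 / h) * ∑ j' : V, (tOne x z j j' + tTwo x z j j') * edgeInd G h a j j' := by
  classical
  have hterm : ∀ j' ∈ Finset.univ, (0:ℝ) ≤ (tOne x z j j' + tTwo x z j j') * edgeInd G h a j j' :=
    fun j' _ => mul_nonneg (add_nonneg (tOne_nonneg _ _ _ _) (tTwo_nonneg _ _ _ _))
      (edgeInd_nonneg _ _ _ _ _)
  set S : ℝ := ∑ j' : V, (tOne x z j j' + tTwo x z j j') * edgeInd G h a j j' with hS
  have hSnonneg : 0 ≤ S := Finset.sum_nonneg hterm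
  have hDTS : ∀ (y : V → Bool), siDTS G h y a j = true ↔
      (y j = true ∨ ∃ j', ∃ hadj : G.Adj j j',
        y j' = true ∧ a ⟨s(j, j'), (SimpleGraph.mem_edgeSet G).mpr hadj⟩ ≤ h) := by
    intro y
    unfold siDTS
    split <;> simp_all
  have key : |(boolToR (siDTS G h x a j) - boolToR (x j)) -
      (boolToR (siDTS G h z a j) - boolToR (z j))| ≤ S := by
    -- helper to pick out a single term of the sum
    have single : ∀ j₀ : V, (tOne x z j j₀ + tTwo x z j j₀) * edgeInd G h a j j₀ ≤ S :=
      fun j₀ => Finset.single_le_sum hterm (Finset.mem_univ j₀)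
    cases hxj : x j <;> cases hzj : z j
    · -- both susceptible
      by_cases hNx : siDTS G h x a j = true <;> by_cases hNz : siDTS G h z a j = true
      · simp [hNx, hNz, boolToR, hxj, hzj, hSnonneg]
      · -- x fires, z doesn't: witness differing neighbor
        obtain hx' := (hDTS x).mp hNx
        rw [hxj] at hx'
        rcases hx' with h1 | ⟨j₀, hadj, hxj₀, hle⟩
        · exact absurd h1 (by simp)
        have hzj₀ : z j₀ = false := by
          by_contra hzj₀
          exact hNz ((hDTS z).mpr (Or.inr ⟨j₀, hadj, by simpa using hzj₀, hle⟩))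
        have ht : tOne x z j j₀ = 1 := by
          unfold tOne
          rw [if_pos ⟨hxj, hzj, by rw [hxj₀, hzj₀]; simp⟩]
        have : (1:ℝ) ≤ S := by
          calc (1:ℝ) ≤ (tOne x z j j₀ + tTwo x z j j₀) * edgeInd G h a j j₀ := by
                rw [ht, edgeInd_eq_one hadj hle]
                nlinarith [tTwo_nonneg x z j j₀]
            _ ≤ S := single j₀
        simp only [Bool.not_eq_true] at hNz
        simp [hNx, hNz, boolToR, hxj, hzj]
        linarith
      · -- z fires, x doesn't
        obtain hz' := (hDTS z).mp hNz
        rw [hzj] at hz'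
        rcases hz' with h1 | ⟨j₀, hadj, hzj₀, hle⟩
        · exact absurd h1 (by simp)
        have hxj₀ : x j₀ = false := by
          by_contra hxj₀
          exact hNx ((hDTS x).mpr (Or.inr ⟨j₀, hadj, by simpa using hxj₀, hle⟩))
        have ht : tOne x z j j₀ = 1 := by
          unfold tOne
          rw [if_pos ⟨hxj, hzj, by rw [hxj₀, hzj₀]; simp⟩]
        have : (1:ℝ) ≤ S := by
          calc (1:ℝ) ≤ (tOne x z j j₀ + tTwo x z j j₀) * edgeInd G h a j j₀ := by
                rw [ht, edgeInd_eq_one hadj hle]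
                nlinarith [tTwo_nonneg x z j j₀]
            _ ≤ S := single j₀
        simp only [Bool.not_eq_true] at hNx
        simp [hNx, hNz, boolToR, hxj, hzj]
        linarith
      · simp only [Bool.not_eq_true] at hNx hNz
        simp [hNx, hNz, boolToR, hxj, hzj, hSnonneg]
    · -- x j = false, z j = true
      have hNz : siDTS G h z a j = true := (hDTS z).mpr (Or.inl hzj)
      by_cases hNx : siDTS G h x a j = true
      · -- need a witness for x firing
        obtain hx' := (hDTS x).mp hNx
        rw [hxj] at hx'
        rcases hx' with h1 | ⟨j₀, hadj, hxj₀, hle⟩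
        · exact absurd h1 (by simp)
        have ht : tTwo x z j j₀ = 1 := by
          unfold tTwo
          rw [if_pos (Or.inr ⟨hxj, hzj, hxj₀⟩)]
        have : (1:ℝ) ≤ S := by
          calc (1:ℝ) ≤ (tOne x z j j₀ + tTwo x z j j₀) * edgeInd G h a j j₀ := by
                rw [ht, edgeInd_eq_one hadj hle]
                nlinarith [tOne_nonneg x z j j₀]
            _ ≤ S := single j₀
        simp [hNx, hNz, boolToR, hxj, hzj]
        linarith
      · simp only [Bool.not_eq_true] at hNx
        simp [hNx, hNz, boolToR, hxj, hzj, hSnonneg]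
    · -- x j = true, z j = false
      have hNx : siDTS G h x a j = true := (hDTS x).mpr (Or.inl hxj)
      by_cases hNz : siDTS G h z a j = true
      · obtain hz' := (hDTS z).mp hNz
        rw [hzj] at hz'
        rcases hz' with h1 | ⟨j₀, hadj, hzj₀, hle⟩
        · exact absurd h1 (by simp)
        have ht : tTwo x z j j₀ = 1 := by
          unfold tTwo
          rw [if_pos (Or.inl ⟨hxj, hzj, hzj₀⟩)]
        have : (1:ℝ) ≤ S := by
          calc (1:ℝ) ≤ (tOne x z j j₀ + tTwo x z j j₀) * edgeInd G h a j j₀ := by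
                rw [ht, edgeInd_eq_one hadj hle]
                nlinarith [tOne_nonneg x z j j₀]
            _ ≤ S := single j₀
        simp [hNx, hNz, boolToR, hxj, hzj]
        linarith
      · simp only [Bool.not_eq_true] at hNz
        simp [hNx, hNz, boolToR, hxj, hzj, hSnonneg]
    · -- both infected
      have hNx : siDTS G h x a j = true := (hDTS x).mpr (Or.inl hxj)
      have hNz : siDTS G h z a j = true := (hDTS z).mpr (Or.inl hzj)
      simp [hNx, hNz, boolToR, hxj, hzj, hSnonneg]
  calc |siF G h x a j - siF G h z a j|
      = |(boolToR (siDTS G h x a j) - boolToR (x j)) -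
          (boolToR (siDTS G h z a j) - boolToR (z j))| / h := by
        unfold siF
        rw [div_sub_div_same, abs_div, abs_of_pos h0]
    _ ≤ S / h := by gcongr
    _ = (1 / h) * S := by ring

/-- **Lemma 4A (Lipschitz property for the SI process).** If the edge timers `A(e)`,
`e ∈ E(G)`, are independent exponential rate-1 random variables and `f(x,a) = (g(x,a)-x)/h`,
then for all states `x` and `z`, `E[‖f(x,A) - f(z,A)‖₁] ≤ k * ‖x - z‖₁`. -/
theorem si_lipschitz {Ω : Type*} [MeasureSpace Ω]
    [IsProbabilityMeasure (ℙ : Measure Ω)]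
    {V : Type*} [Fintype V] (G : SimpleGraph V) (k : ℕ)
    (hdeg : ∀ j : V, (G.neighborSet j).ncard ≤ k)
    (h : ℝ) (h0 : 0 < h)
    (A : Ω → G.edgeSet → ℝ)
    (hAmeas : ∀ e : G.edgeSet, Measurable fun ω => A ω e)
    (hAindep : iIndepFun (fun (e : G.edgeSet) ω => A ω e) ℙ)
    (hAdist : ∀ e : G.edgeSet, Measure.map (fun ω => A ω e) ℙ = expMeasure 1)
    (x z : V → Bool) :
    ∫ ω, ∑ j : V, |siF G h x (A ω) j - siF G h z (A ω) j| ∂ℙ ≤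
      (k : ℝ) * ∑ j : V, |boolToR (x j) - boolToR (z j)| := by
  classical
  -- the probability that a given edge timer fires within time h
  set c0 : ℝ := (expMeasure 1 (Set.Iic h)).toReal with hc0def
  have hc0nonneg : 0 ≤ c0 := ENNReal.toReal_nonneg
  have hc0le : c0 ≤ h := by
    have hprob : IsProbabilityMeasure (expMeasure (1:ℝ)) :=
      isProbabilityMeasure_expMeasure one_pos
    have h1 := cdf_expMeasure_eq (r := 1) one_pos h
    rw [cdf_eq_real] at h1
    rw [hc0def, ← measureReal_def, h1, if_pos h0.le, one_mul]
    nlinarith [Real.add_one_le_exp (-h)]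
  -- integrability of each elementary indicator
  have hindInt : ∀ j j' : V, Integrable (fun ω => edgeInd G h (A ω) j j') ℙ := by
    intro j j'
    unfold edgeInd
    by_cases hadj : G.Adj j j'
    · simp only [dif_pos hadj]
      have hmeas : MeasurableSet {ω : Ω |
          A ω ⟨s(j, j'), (SimpleGraph.mem_edgeSet G).mpr hadj⟩ ≤ h} :=
        (hAmeas _) measurableSet_Iic
      have : (fun ω : Ω => if A ω ⟨s(j, j'), (SimpleGraph.mem_edgeSet G).mpr hadj⟩ ≤ h
          then (1:ℝ) else 0) = Set.indicator {ω : Ω |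
          A ω ⟨s(j, j'), (SimpleGraph.mem_edgeSet G).mpr hadj⟩ ≤ h} (fun _ => (1:ℝ)) := by
        ext ω
        rw [Set.indicator_apply]
        rfl
      rw [this]
      exact (integrable_const (1:ℝ)).indicator hmeas
    · simp only [dif_neg hadj]
      exact integrable_const 0
  -- value of the integral of each elementary indicator
  have hI : ∀ j j' : V, ∫ ω, edgeInd G h (A ω) j j' ∂ℙ = if G.Adj j j' then c0 else 0 := by
    intro j j'
    unfold edgeInd
    by_cases hadj : G.Adj j j'
    · simp only [dif_pos hadj, if_pos hadj]
      set e : G.edgeSet := ⟨s(j, j'), (SimpleGraph.mem_edgeSet G).mpr hadj⟩ with he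
      have hmeas : MeasurableSet {ω : Ω | A ω e ≤ h} := (hAmeas e) measurableSet_Iic
      have heq : (fun ω : Ω => if A ω e ≤ h then (1:ℝ) else 0)
          = Set.indicator {ω : Ω | A ω e ≤ h} (fun _ => (1:ℝ)) := by
        ext ω
        rw [Set.indicator_apply]
        rfl
      rw [heq, integral_indicator_const (1:ℝ) hmeas, smul_eq_mul, mul_one, hc0def]
      congr 1
      have : {ω : Ω | A ω e ≤ h} = (fun ω => A ω e) ⁻¹' Set.Iic h := rfl
      rw [this, measureReal_def, ← Measure.map_apply (hAmeas e) measurableSet_Iic, hAdist e]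
    · simp only [dif_neg hadj, if_neg hadj]
      simp
  -- the dominating integrable function
  set gbound : Ω → ℝ := fun ω =>
    (1 / h) * ∑ j : V, ∑ j' : V, (tOne x z j j' + tTwo x z j j') * edgeInd G h (A ω) j j'
    with hgbound
  have hgInt : Integrable gbound ℙ := by
    apply Integrable.const_mul
    apply integrable_finset_sum
    intro j _
    apply integrable_finset_sum
    intro j' _
    exact (hindInt j j').const_mul _
  have hmono : ∀ ω, ∑ j : V, |siF G h x (A ω) j - siF G h z (A ω) j| ≤ gbound ω := by
    intro ω
    show _ ≤ (1 / h) * ∑ j : V, ∑ j' : V, (tOne x z j j' + tTwo x z j j') * edgeInd G h (A ω) j j'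
    rw [Finset.mul_sum]
    apply Finset.sum_le_sum
    intro j _
    exact siF_pointwise G h0 x z (A ω) j
  have step1 : ∫ ω, ∑ j : V, |siF G h x (A ω) j - siF G h z (A ω) j| ∂ℙ ≤ ∫ ω, gbound ω ∂ℙ := by
    apply integral_mono_of_nonneg
    · exact Filter.Eventually.of_forall fun ω =>
        Finset.sum_nonneg fun j _ => abs_nonneg _
    · exact hgInt
    · exact Filter.Eventually.of_forall hmono
  refine step1.trans ?_
  -- compute the integral of the dominating function
  have hcalc : ∫ ω, gbound ω ∂ℙ =
      (1 / h) * ∑ j : V, ∑ j' : V, (tOne x z j j' + tTwo x z j j') *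
        (if G.Adj j j' then c0 else 0) := by
    rw [hgbound, integral_const_mul]
    congr 1
    rw [integral_finset_sum _ (fun j _ => integrable_finset_sum _
      (fun j' _ => (hindInt j j').const_mul _))]
    apply Finset.sum_congr rfl
    intro j _
    rw [integral_finset_sum _ (fun j' _ => (hindInt j j').const_mul _)]
    apply Finset.sum_congr rfl
    intro j' _
    rw [integral_const_mul, hI j j']
  rw [hcalc]
  set I : V → V → ℝ := fun j j' => if G.Adj j j' then c0 else 0 with hIdef
  have hIsymm : ∀ j j', I j j' = I j' j := by
    intro j j'
    simp only [hIdef]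
    by_cases hadj : G.Adj j j'
    · rw [if_pos hadj, if_pos hadj.symm]
    · rw [if_neg hadj, if_neg (fun hs => hadj hs.symm)]
  have hInonneg : ∀ j j', 0 ≤ I j j' := by
    intro j j'
    simp only [hIdef]
    split <;> [exact hc0nonneg; exact le_rfl]
  -- swap the tOne part of the double sum
  have hswap : ∑ j : V, ∑ j' : V, (tOne x z j j' + tTwo x z j j') * I j j'
      = ∑ j : V, ∑ j' : V, (tOne x z j' j + tTwo x z j j') * I j j' := by
    simp only [add_mul, Finset.sum_add_distrib]
    congr 1
    rw [Finset.sum_comm]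
    apply Finset.sum_congr rfl
    intro j _
    apply Finset.sum_congr rfl
    intro j' _
    rw [hIsymm j' j]
  rw [hswap]
  -- bound each term
  have hdegR : ∀ j : V, ∑ j' : V, I j j' ≤ (k : ℝ) * c0 := by
    intro j
    have : ∑ j' : V, I j j' = ((Finset.univ.filter (fun j' => G.Adj j j')).card : ℝ) * c0 := by
      simp only [hIdef]
      rw [Finset.sum_ite, Finset.sum_const, Finset.sum_const]
      simp [mul_comm]
    rw [this]
    have hcard : (Finset.univ.filter (fun j' => G.Adj j j')).card = (G.neighborSet j).ncard := by
      rw [Set.ncard_eq_toFinset_card']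
      congr 1
      ext j'
      simp [SimpleGraph.mem_neighborSet]
    apply mul_le_mul_of_nonneg_right _ hc0nonneg
    rw [hcard]
    exact_mod_cast hdeg j
  have hbound : ∑ j : V, ∑ j' : V, (tOne x z j' j + tTwo x z j j') * I j j'
      ≤ ∑ j : V, |boolToR (x j) - boolToR (z j)| * ((k:ℝ) * c0) := by
    apply Finset.sum_le_sum
    intro j _
    calc ∑ j' : V, (tOne x z j' j + tTwo x z j j') * I j j'
        ≤ ∑ j' : V, |boolToR (x j) - boolToR (z j)| * I j j' := by
          apply Finset.sum_le_sum
          intro j' _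
          exact mul_le_mul_of_nonneg_right (tOne_add_tTwo_le x z j j') (hInonneg j j')
      _ = |boolToR (x j) - boolToR (z j)| * ∑ j' : V, I j j' := by rw [Finset.mul_sum]
      _ ≤ |boolToR (x j) - boolToR (z j)| * ((k:ℝ) * c0) :=
          mul_le_mul_of_nonneg_left (hdegR j) (abs_nonneg _)
  calc (1 / h) * ∑ j : V, ∑ j' : V, (tOne x z j' j + tTwo x z j j') * I j j'
      ≤ (1 / h) * ∑ j : V, |boolToR (x j) - boolToR (z j)| * ((k:ℝ) * c0) := by
        apply mul_le_mul_of_nonneg_left hbound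
        positivity
    _ = (c0 / h) * ((k:ℝ) * ∑ j : V, |boolToR (x j) - boolToR (z j)|) := by
        rw [← Finset.sum_mul]
        ring
    _ ≤ 1 * ((k:ℝ) * ∑ j : V, |boolToR (x j) - boolToR (z j)|) := by
        apply mul_le_mul_of_nonneg_right
        · rw [div_le_one h0]; exact hc0le
        · positivity
    _ = (k : ℝ) * ∑ j : V, |boolToR (x j) - boolToR (z j)| := one_mul _
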